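/- Let V : ℝ → ℝ be continuous with lim_{x→±∞} V(x)/(|x|+1) = +∞ and suppose V(x) = V(−x) + x for all x ∈ ℝ (equivalently, x ↦ V(x) − x/2 is an even function). Let μ be a Borel probability measure on ℝ with compact support, and let μ̃ be the pushforward of μ under the map x ↦ −x. Then I_V(μ̃) = I_V(μ), as elements of (−∞, +∞]. Consequently, if μ_V is the unique compactly supported probability measure minimizing I_V, then μ_V is symmetric: μ_V(−A) = μ_V(A) for every Borel set A. -/

import Mathlib

open MeasureTheory Filter Set
open scoped ENNReal

/-- The energy kernel `k_V(t,s) = ½log|t−s|⁻¹ + ½log|eᵗ−eˢ|⁻¹ + ½V(t) + ½V(s)`,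
as a real number off the diagonal (on the diagonal the kernel is `+∞`). -/
noncomputable def kernelV (V : ℝ → ℝ) (t s : ℝ) : ℝ :=
  1/2 * (-Real.log |t - s|) + 1/2 * (-Real.log |Real.exp t - Real.exp s|)
    + 1/2 * V t + 1/2 * V s

/-- The positive part of the energy kernel, valued in `ℝ≥0∞`; it is `⊤` on the diagonal. -/
noncomputable def kernelVPos (V : ℝ → ℝ) (p : ℝ × ℝ) : ℝ≥0∞ :=
  if p.1 = p.2 then ⊤ else ENNReal.ofReal (kernelV V p.1 p.2)

/-- The negative part of the energy kernel, valued in `ℝ≥0∞`; it vanishes on the diagonal. -/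
noncomputable def kernelVNeg (V : ℝ → ℝ) (p : ℝ × ℝ) : ℝ≥0∞ :=
  if p.1 = p.2 then 0 else ENNReal.ofReal (-(kernelV V p.1 p.2))

/-- The energy functional `I_V(μ) = ∬ k_V(t,s) dμ(t)dμ(s)`, with values in `EReal`. -/
noncomputable def energyV (V : ℝ → ℝ) (μ : Measure ℝ) : EReal :=
  ((∫⁻ p : ℝ × ℝ, kernelVPos V p ∂(μ.prod μ)) : EReal)
    - ((∫⁻ p : ℝ × ℝ, kernelVNeg V p ∂(μ.prod μ)) : EReal)

lemma kernelV_neg_neg (V : ℝ → ℝ) (hsym : ∀ x : ℝ, V x = V (-x) + x)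
    {t s : ℝ} (hts : t ≠ s) : kernelV V (-t) (-s) = kernelV V t s := by
  have h1 : |(-t) - (-s)| = |t - s| := by
    rw [show (-t) - (-s) = -(t - s) by ring, abs_neg]
  have hexp : Real.exp (-t) - Real.exp (-s)
      = (Real.exp s - Real.exp t) * Real.exp (-t - s) := by
    rw [mul_comm, mul_sub, ← Real.exp_add, ← Real.exp_add]
    ring_nf
  have hne : Real.exp s - Real.exp t ≠ 0 := by
    intro h
    exact hts (Real.exp_injective (by linarith [sub_eq_zero.mp h])).symm
  have h2 : Real.log |Real.exp (-t) - Real.exp (-s)|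
      = Real.log |Real.exp t - Real.exp s| + (-t - s) := by
    rw [hexp, abs_mul, abs_of_pos (Real.exp_pos _),
      Real.log_mul (by simpa using hne) (Real.exp_ne_zero _), Real.log_exp,
      abs_sub_comm]
  have hVt := hsym t
  have hVs := hsym s
  simp only [kernelV, h1, h2]
  have hVt' : V (-t) = V t - t := by linarith
  have hVs' : V (-s) = V s - s := by linarith
  rw [hVt', hVs']
  ring

/-- If `V(x) = V(−x) + x`, then the energy `I_V` is invariant under the
pushforward by `x ↦ −x`; consequently the unique compactly supported minimizing probability
measure is symmetric around the origin. -/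
theorem energy_symmetric
    (V : ℝ → ℝ) (hcont : Continuous V)
    (hgrowth : Tendsto (fun x => V x / (|x| + 1)) atTop atTop ∧
      Tendsto (fun x => V x / (|x| + 1)) atBot atTop)
    (hsym : ∀ x : ℝ, V x = V (-x) + x) :
    (∀ μ : Measure ℝ, IsProbabilityMeasure μ → (∃ K : Set ℝ, IsCompact K ∧ μ Kᶜ = 0) →
      energyV V (Measure.map (fun x => -x) μ) = energyV V μ) ∧
    (∀ μV : Measure ℝ, IsProbabilityMeasure μV → (∃ K : Set ℝ, IsCompact K ∧ μV Kᶜ = 0) →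
      (∀ ν : Measure ℝ, IsProbabilityMeasure ν → energyV V μV ≤ energyV V ν) →
      (∀ ν : Measure ℝ, IsProbabilityMeasure ν → (∃ K : Set ℝ, IsCompact K ∧ ν Kᶜ = 0) →
        (∀ ρ : Measure ℝ, IsProbabilityMeasure ρ → energyV V ν ≤ energyV V ρ) → ν = μV) →
      ∀ A : Set ℝ, MeasurableSet A → μV ((fun x => -x) ⁻¹' A) = μV A) := by
  have hneg : Measurable (fun x : ℝ => -x) := measurable_neg
  have hker : Measurable (fun p : ℝ × ℝ => kernelV V p.1 p.2) := by
    unfold kernelV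
    refine ((((Real.measurable_log.comp
      ((measurable_fst.sub measurable_snd).abs)).neg.const_mul _).add
      ((Real.measurable_log.comp (((Real.measurable_exp.comp measurable_fst).sub
        (Real.measurable_exp.comp measurable_snd)).abs)).neg.const_mul _)).add
      ((hcont.measurable.comp measurable_fst).const_mul _)).add
      ((hcont.measurable.comp measurable_snd).const_mul _)
  have hdiag : MeasurableSet {p : ℝ × ℝ | p.1 = p.2} :=
    measurableSet_eq_fun measurable_fst measurable_snd
  have hPos : Measurable (kernelVPos V) := by
    unfold kernelVPos
    exact Measurable.ite hdiag measurable_const (ENNReal.measurable_ofReal.comp hker)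
  have hNeg : Measurable (kernelVNeg V) := by
    unfold kernelVNeg
    exact Measurable.ite hdiag measurable_const (ENNReal.measurable_ofReal.comp hker.neg)
  have hPosInv : ∀ p : ℝ × ℝ, kernelVPos V (Prod.map (fun x : ℝ => -x) (fun x : ℝ => -x) p)
      = kernelVPos V p := by
    rintro ⟨t, s⟩
    by_cases h : t = s
    · simp [kernelVPos, h]
    · simp only [kernelVPos, Prod.map, Prod.fst, Prod.snd, neg_inj, if_neg h]
      rw [kernelV_neg_neg V hsym h]
  have hNegInv : ∀ p : ℝ × ℝ, kernelVNeg V (Prod.map (fun x : ℝ => -x) (fun x : ℝ => -x) p)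
      = kernelVNeg V p := by
    rintro ⟨t, s⟩
    by_cases h : t = s
    · simp [kernelVNeg, h]
    · simp only [kernelVNeg, Prod.map, Prod.fst, Prod.snd, neg_inj, if_neg h]
      rw [kernelV_neg_neg V hsym h]
  have key : ∀ μ : Measure ℝ, IsProbabilityMeasure μ →
      energyV V (Measure.map (fun x => -x) μ) = energyV V μ := by
    intro μ hμ
    have hmap : (Measure.map (fun x : ℝ => -x) μ).prod (Measure.map (fun x : ℝ => -x) μ)
        = (μ.prod μ).map (Prod.map (fun x : ℝ => -x) (fun x : ℝ => -x)) :=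
      Measure.map_prod_map μ μ hneg hneg
    have h1 : ∫⁻ p, kernelVPos V p
          ∂((Measure.map (fun x : ℝ => -x) μ).prod (Measure.map (fun x : ℝ => -x) μ))
        = ∫⁻ p, kernelVPos V p ∂(μ.prod μ) := by
      rw [hmap, lintegral_map hPos (hneg.prodMap hneg)]
      exact lintegral_congr hPosInv
    have h2 : ∫⁻ p, kernelVNeg V p
          ∂((Measure.map (fun x : ℝ => -x) μ).prod (Measure.map (fun x : ℝ => -x) μ))
        = ∫⁻ p, kernelVNeg V p ∂(μ.prod μ) := by
      rw [hmap, lintegral_map hNeg (hneg.prodMap hneg)]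
      exact lintegral_congr hNegInv
    unfold energyV
    rw [h1, h2]
  refine ⟨fun μ hμ _ => key μ hμ, ?_⟩
  intro μV hμV ⟨K, hK, hKc⟩ hmin huniq A hA
  set ν : Measure ℝ := Measure.map (fun x : ℝ => -x) μV with hν
  have hνprob : IsProbabilityMeasure ν := Measure.isProbabilityMeasure_map hneg.aemeasurable
  have hνcompact : ∃ K' : Set ℝ, IsCompact K' ∧ ν K'ᶜ = 0 := by
    refine ⟨(fun x : ℝ => -x) '' K, hK.image continuous_neg, ?_⟩
    rw [hν, Measure.map_apply hneg
      (hK.image continuous_neg).isClosed.measurableSet.compl]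
    have : (fun x : ℝ => -x) ⁻¹' ((fun x : ℝ => -x) '' K)ᶜ = Kᶜ := by
      ext x
      simp only [mem_preimage, mem_compl_iff, mem_image]
      constructor
      · intro h hx; exact h ⟨x, hx, rfl⟩
      · rintro h ⟨y, hy, hyx⟩
        have : y = x := by linarith [neg_injective hyx]
        exact h (this ▸ hy)
    rw [this]
    exact hKc
  have hνmin : ∀ ρ : Measure ℝ, IsProbabilityMeasure ρ → energyV V ν ≤ energyV V ρ := by
    intro ρ hρ
    rw [hν, key μV hμV]
    exact hmin ρ hρ
  have heq : ν = μV := huniq ν hνprob hνcompact hνmin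
  calc μV ((fun x => -x) ⁻¹' A) = ν A := (Measure.map_apply hneg hA).symm
    _ = μV A := by rw [heq]
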